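/- The permutation matrix U_{2^⊗3}((1 2 3)), the 8×8 matrix sending a ⊗ b ⊗ c to c ⊗ a ⊗ b for all a,b,c ∈ ℂ², equals (1/4)I₂⊗I₂⊗I₂ + (1/4)Σ_l I₂⊗σ_l⊗σ_l + (1/4)Σ_l σ_l⊗I₂⊗σ_l + (1/4)Σ_l σ_l⊗σ_l⊗I₂ − (i/4)Σ_{i,j,k} ε_{ijk} σ_i⊗σ_j⊗σ_k. -/

import Mathlib

open Matrix Kronecker

/-- The Pauli matrices σ₁, σ₂, σ₃. -/
noncomputable def pauli : Fin 3 → Matrix (Fin 2) (Fin 2) ℂ :=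
  ![!![0, 1; 1, 0], !![0, -Complex.I; Complex.I, 0], !![1, 0; 0, -1]]

/-- The Levi-Civita symbol on three indices, with ε₁₂₃ = 1. -/
def levicivita : Fin 3 → Fin 3 → Fin 3 → ℂ := fun i j k =>
  if (i,j,k) = (0,1,2) ∨ (i,j,k) = (1,2,0) ∨ (i,j,k) = (2,0,1) then 1
  else if (i,j,k) = (2,1,0) ∨ (i,j,k) = (1,0,2) ∨ (i,j,k) = (0,2,1) then -1
  else 0

/-- Standard basis column vectors of ℂ². -/
noncomputable def eec (i : Fin 2) : Matrix (Fin 2) (Fin 1) ℂ := fun x _ => if x = i then 1 else 0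

set_option maxHeartbeats 2000000 in
theorem tensor_permutation_123_pauli
    (U : Matrix ((Fin 2 × Fin 2) × Fin 2) ((Fin 2 × Fin 2) × Fin 2) ℂ)
    (hU : ∀ a b c : Matrix (Fin 2) (Fin 1) ℂ,
      U * (a ⊗ₖ b ⊗ₖ c) = c ⊗ₖ a ⊗ₖ b) :
    U = (1/4 : ℂ) • ((1 : Matrix (Fin 2) (Fin 2) ℂ) ⊗ₖ (1 : Matrix (Fin 2) (Fin 2) ℂ)
            ⊗ₖ (1 : Matrix (Fin 2) (Fin 2) ℂ))
      + (1/4 : ℂ) • ∑ l : Fin 3, (1 : Matrix (Fin 2) (Fin 2) ℂ) ⊗ₖ pauli l ⊗ₖ pauli l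
      + (1/4 : ℂ) • ∑ l : Fin 3, pauli l ⊗ₖ (1 : Matrix (Fin 2) (Fin 2) ℂ) ⊗ₖ pauli l
      + (1/4 : ℂ) • ∑ l : Fin 3, pauli l ⊗ₖ pauli l ⊗ₖ (1 : Matrix (Fin 2) (Fin 2) ℂ)
      - (Complex.I/4) • ∑ i : Fin 3, ∑ j : Fin 3, ∑ k : Fin 3,
          levicivita i j k • (pauli i ⊗ₖ pauli j ⊗ₖ pauli k) := by
  have hM : U = fun p q => if p.1.1 = q.2 ∧ p.1.2 = q.1.1 ∧ p.2 = q.1.2 then 1 else 0 := by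
    ext ⟨⟨x,y⟩,z⟩ ⟨⟨a,b⟩,c⟩
    have h := congrFun (congrFun (hU (eec a) (eec b) (eec c)) ((x,y),z)) ((0,0),0)
    simp [mul_apply, kroneckerMap_apply, eec, Fintype.sum_prod_type] at h
    simp [h]
    aesop
  rw [hM]
  ext ⟨⟨x,y⟩,z⟩ ⟨⟨a,b⟩,c⟩
  fin_cases x <;> fin_cases y <;> fin_cases z <;> fin_cases a <;> fin_cases b <;> fin_cases c <;>
  · simp only [Matrix.add_apply, Matrix.sub_apply, Matrix.smul_apply, Matrix.sum_apply,
      Fin.sum_univ_three, kroneckerMap_apply, pauli, levicivita, Matrix.one_apply, smul_eq_mul,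
      Matrix.cons_val', Matrix.cons_val_zero, Matrix.cons_val_one, Matrix.cons_val_two, Matrix.tail_cons, Matrix.head_cons,
      Matrix.empty_val', Matrix.cons_val_fin_one, Matrix.head_fin_const]
    norm_num [Prod.ext_iff, Fin.ext_iff, Complex.ext_iff]
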